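/- Let m be an even integer with m ≥ 14 and let v = (v_1, …, v_t) be an (m,t)-vector. Then the length of every cycle in the Tanner graph TG(H_m(v)) is divisible by 4; in particular TG(H_m(v)) contains no cycle of length 6 and no cycle of length 10. -/

import Mathlib

/-- The Tanner graph TG(H_m(v)): check nodes are `ZMod m`, variable nodes are the pairs
`(i, j) : Fin t × Fin (m / 2)`, and variable node `(i, j)` is adjacent exactly to the
check nodes `2j mod m` and `(v i + 2j) mod m`. -/
def tannerGraph (m t : ℕ) (v : Fin t → ℕ) :
    SimpleGraph ((ZMod m) ⊕ (Fin t × Fin (m / 2))) :=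
  SimpleGraph.fromRel (fun x y =>
    match x, y with
    | Sum.inl a, Sum.inr p =>
        a = ((2 * (p.2 : ℕ) : ℕ) : ZMod m) ∨ a = ((v p.1 + 2 * (p.2 : ℕ) : ℕ) : ZMod m)
    | _, _ => False)

/-- Parity map on check nodes. -/
noncomputable def tgPar (m : ℕ) (hm : Even m) : ZMod m →+* ZMod 2 :=
  ZMod.castHom hm.two_dvd (ZMod 2)

lemma tgPar_natCast (m : ℕ) (hm : Even m) (n : ℕ) :
    tgPar m hm ((n : ℕ) : ZMod m) = (n : ZMod 2) := by
  simp [tgPar, map_natCast]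

lemma zmod2_add_self (x : ZMod 2) : x + x = 0 := by
  rw [← two_mul, show (2 : ZMod 2) = 0 by decide, zero_mul]

/-- Adjacency characterization from a check node. -/
lemma tg_adj_inl (m t : ℕ) (v : Fin t → ℕ) (a : ZMod m)
    (w : (ZMod m) ⊕ (Fin t × Fin (m / 2)))
    (h : (tannerGraph m t v).Adj (Sum.inl a) w) :
    ∃ p : Fin t × Fin (m / 2), w = Sum.inr p ∧
      (a = ((2 * (p.2 : ℕ) : ℕ) : ZMod m) ∨ a = ((v p.1 + 2 * (p.2 : ℕ) : ℕ) : ZMod m)) := by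
  rw [tannerGraph, SimpleGraph.fromRel_adj] at h
  obtain ⟨hne, h | h⟩ := h
  · cases w with
    | inl b => exact h.elim
    | inr p => exact ⟨p, rfl, h⟩
  · cases w with
    | inl b => exact h.elim
    | inr p => exact h.elim

/-- Adjacency characterization from a variable node. -/
lemma tg_adj_inr (m t : ℕ) (v : Fin t → ℕ) (p : Fin t × Fin (m / 2))
    (w : (ZMod m) ⊕ (Fin t × Fin (m / 2)))
    (h : (tannerGraph m t v).Adj (Sum.inr p) w) :
    ∃ a : ZMod m, w = Sum.inl a ∧
      (a = ((2 * (p.2 : ℕ) : ℕ) : ZMod m) ∨ a = ((v p.1 + 2 * (p.2 : ℕ) : ℕ) : ZMod m)) := by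
  rw [tannerGraph, SimpleGraph.fromRel_adj] at h
  obtain ⟨hne, h | h⟩ := h
  · cases w with
    | inl b => exact h.elim
    | inr q => exact h.elim
  · cases w with
    | inl b => exact ⟨b, rfl, h⟩
    | inr q => exact h.elim

/-- The two check neighbours of a variable node have different parities. -/
lemma tg_par_neighbors (m t : ℕ) (hm : Even m) (v : Fin t → ℕ) (hodd : ∀ i, Odd (v i))
    (pr : Fin t × Fin (m / 2)) (a a' : ZMod m)
    (hA : a = ((2 * (pr.2 : ℕ) : ℕ) : ZMod m) ∨ a = ((v pr.1 + 2 * (pr.2 : ℕ) : ℕ) : ZMod m))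
    (hA' : a' = ((2 * (pr.2 : ℕ) : ℕ) : ZMod m) ∨ a' = ((v pr.1 + 2 * (pr.2 : ℕ) : ℕ) : ZMod m))
    (hne : a ≠ a') :
    tgPar m hm a + tgPar m hm a' = 1 := by
  have h0 : ((2 * (pr.2 : ℕ) : ℕ) : ZMod 2) = 0 :=
    (ZMod.natCast_eq_zero_iff _ 2).mpr ⟨(pr.2 : ℕ), rfl⟩
  have h1 : ((v pr.1 + 2 * (pr.2 : ℕ) : ℕ) : ZMod 2) = 1 := by
    have hmod : (v pr.1 + 2 * (pr.2 : ℕ)) % 2 = 1 := by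
      have := (Nat.odd_iff).mp (hodd pr.1)
      omega
    rw [← ZMod.natCast_mod _ 2, hmod, Nat.cast_one]
  rcases hA with rfl | rfl <;> rcases hA' with rfl | rfl
  · exact absurd rfl hne
  · rw [tgPar_natCast, tgPar_natCast, h0, h1, zero_add]
  · rw [tgPar_natCast, tgPar_natCast, h0, h1, add_zero]
  · exact absurd rfl hne

/-- Key induction: walks between check nodes with no two consecutive equal edges have
even length `2k`, with `k` matching the endpoint parities; similarly for walks from a
variable node that do not immediately go back along a given edge. -/
theorem tg_key (m t : ℕ) (hm : Even m) (v : Fin t → ℕ) (hodd : ∀ i, Odd (v i))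
    {x y : (ZMod m) ⊕ (Fin t × Fin (m / 2))} (p : (tannerGraph m t v).Walk x y) :
    p.edges.Chain' (· ≠ ·) →
    ((∀ a b, x = Sum.inl a → y = Sum.inl b →
        ∃ k : ℕ, p.length = 2 * k ∧ tgPar m hm a + tgPar m hm b = (k : ZMod 2)) ∧
     (∀ pr b a, x = Sum.inr pr → y = Sum.inl b →
        (∀ e ∈ p.edges.head?, e ≠ s(Sum.inr pr, Sum.inl a)) →
        (a = ((2 * (pr.2 : ℕ) : ℕ) : ZMod m) ∨
          a = ((v pr.1 + 2 * (pr.2 : ℕ) : ℕ) : ZMod m)) →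
        ∃ k : ℕ, p.length = 2 * k + 1 ∧
          tgPar m hm a + tgPar m hm b = ((k : ZMod 2) + 1))) := by
  induction p with
  | nil =>
    intro _
    constructor
    · rintro a b rfl hab
      obtain rfl : a = b := by simpa using hab
      exact ⟨0, rfl, by simpa using zmod2_add_self (tgPar m hm a)⟩
    · rintro pr b a rfl hab
      simp at hab
  | cons h q IH =>
    rename_i x w y
    intro hch
    have hchq : q.edges.Chain' (· ≠ ·) := (List.isChain_cons.mp hch).2
    constructor
    · rintro a b rfl rfl
      obtain ⟨pr, rfl, hA⟩ := tg_adj_inl m t v a w h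
      have hhead : ∀ e ∈ q.edges.head?, e ≠ s(Sum.inr pr, Sum.inl a) := by
        intro e he heq
        have h12 := (List.isChain_cons.mp hch).1 e he
        exact h12 (by rw [heq, Sym2.eq_swap]; rfl)
      obtain ⟨k, hk, hpk⟩ := (IH hchq).2 pr b a rfl rfl hhead hA
      refine ⟨k + 1, by simp [hk]; ring, ?_⟩
      rw [hpk]
      push_cast
      ring
    · rintro pr b a rfl rfl hhead hA
      obtain ⟨a', rfl, hA'⟩ := tg_adj_inr m t v pr w h
      have hne : a' ≠ a := by
        intro hEq
        exact hhead s(Sum.inr pr, Sum.inl a') (by simp) (by rw [hEq])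
      obtain ⟨k, hk, hpk⟩ := (IH hchq).1 a' b rfl rfl
      refine ⟨k, by simp [hk], ?_⟩
      have hpar : tgPar m hm a + tgPar m hm a' = 1 :=
        tg_par_neighbors m t hm v hodd pr a a' hA hA' (Ne.symm hne)
      calc tgPar m hm a + tgPar m hm b
          = (tgPar m hm a + tgPar m hm a') + (tgPar m hm a' + tgPar m hm b)
            - (tgPar m hm a' + tgPar m hm a') := by ring
        _ = 1 + (k : ZMod 2) - 0 := by rw [hpar, hpk, zmod2_add_self]
        _ = (k : ZMod 2) + 1 := by ring

/-- The divisibility result for cycles based at a check node. -/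
theorem tg_cycle_inl (m t : ℕ) (hm : Even m) (v : Fin t → ℕ) (hodd : ∀ i, Odd (v i))
    (a : ZMod m) (c : (tannerGraph m t v).Walk (Sum.inl a) (Sum.inl a))
    (hc : c.IsCycle) : 4 ∣ c.length := by
  have hch : c.edges.Chain' (· ≠ ·) := hc.edges_nodup.isChain
  obtain ⟨k, hk, hpk⟩ := (tg_key m t hm v hodd c hch).1 a a rfl rfl
  have h0 : (k : ZMod 2) = 0 := by rw [← hpk, zmod2_add_self]
  have h2k : 2 ∣ k := (ZMod.natCast_eq_zero_iff k 2).mp h0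
  obtain ⟨j, rfl⟩ := h2k
  exact ⟨j, by rw [hk]; ring⟩

/-- for an even `m ≥ 14` and an `(m,t)`-vector `v`, the length of every cycle in
`TG(H_m(v))` is divisible by `4`; in particular `TG(H_m(v))` has no cycle of length `6` and
no cycle of length `10`. -/
theorem statement4 (m t : ℕ) (hm : Even m) (hm14 : 14 ≤ m)
    (v : Fin t → ℕ) (hodd : ∀ i, Odd (v i)) (hpos : ∀ i, 0 < v i)
    (hmono : StrictMono v) (hlt : ∀ i, v i < m) :
    ∀ (x : (ZMod m) ⊕ (Fin t × Fin (m / 2))) (c : (tannerGraph m t v).Walk x x),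
      c.IsCycle → 4 ∣ c.length ∧ c.length ≠ 6 ∧ c.length ≠ 10 := by
  intro x c hc
  have hdvd : 4 ∣ c.length := by
    cases x with
    | inl a => exact tg_cycle_inl m t hm v hodd a c hc
    | inr q =>
      cases c with
      | nil => exact absurd rfl hc.ne_nil
      | cons h p =>
        rename_i w
        obtain ⟨a, rfl, _⟩ := tg_adj_inr m t v q w h
        have hw : Sum.inl a ∈ (SimpleGraph.Walk.cons h p).support := by
          simp [SimpleGraph.Walk.support_cons, SimpleGraph.Walk.start_mem_support]
        have hrot := tg_cycle_inl m t hm v hodd a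
          ((SimpleGraph.Walk.cons h p).rotate _ hw) (hc.rotate hw)
        have hlen : ((SimpleGraph.Walk.cons h p).rotate _ hw).length
            = (SimpleGraph.Walk.cons h p).length := by
          rw [← SimpleGraph.Walk.length_edges, ← SimpleGraph.Walk.length_edges]
          exact (SimpleGraph.Walk.rotate_edges _ _ hw).perm.length_eq
        rwa [hlen] at hrot
  refine ⟨hdvd, ?_, ?_⟩ <;> intro h <;> rw [h] at hdvd <;> omega
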